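/- FA(run,⊓) ⊆ FA(𝔸), DFA(run,⊓) ⊆ DFA(𝔸), CFA(run,⊓) ⊆ CFA(𝔸), and CDFA(run,⊓) ⊆ CDFA(𝔸). -/

import Mathlib

open Set

/-- A finite automaton used for recognizing ω-words over the alphabet `A`:
a finite type of states, a transition relation, an initial state and an
acceptance table (a set of sets of states). -/
structure OFA (A : Type) : Type 1 where
  Q : Type
  [finQ : Finite Q]
  T : Q → A → Q → Prop
  q0 : Q
  Acc : Set (Set Q)

attribute [instance] OFA.finQ

namespace OFA

variable {A : Type}

/-- Deterministic automaton: at most one successor per state and letter. -/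
def Deterministic (M : OFA A) : Prop :=
  ∀ p a q q', M.T p a q → M.T p a q' → q = q'

/-- Complete automaton: at least one successor per state and letter. -/
def Complete (M : OFA A) : Prop :=
  ∀ p a, ∃ q, M.T p a q

/-- `p` is an initial infinite path of `M` with label `x`. -/
def InitPath (M : OFA A) (p : ℕ → M.Q) (x : ℕ → A) : Prop :=
  p 0 = M.q0 ∧ ∀ i, M.T (p i) (x i) (p (i + 1))

/-- States visited at least once (at a positive index). -/
def runSet (M : OFA A) (p : ℕ → M.Q) : Set M.Q := {q | ∃ i, 0 < i ∧ p i = q}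

/-- States visited infinitely often. -/
def infSet (M : OFA A) (p : ℕ → M.Q) : Set M.Q := {q | ∀ n, ∃ i, n ≤ i ∧ p i = q}

/-- States visited finitely many times but at least once. -/
def finSet (M : OFA A) (p : ℕ → M.Q) : Set M.Q := M.runSet p \ M.infSet p

/-- States visited finitely many times or never. -/
def ninfSet (M : OFA A) (p : ℕ → M.Q) : Set M.Q := (M.infSet p)ᶜ

end OFA

/-- Selector for the set of states associated to a path. -/
inductive CSel | run | inf | fin | ninf

/-- Selector for the comparison relation with a member of the acceptance table. -/
inductive RSel | meet | sub | eq

def OFA.csel {A : Type} (M : OFA A) : CSel → (ℕ → M.Q) → Set M.Q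
  | .run => M.runSet
  | .inf => M.infSet
  | .fin => M.finSet
  | .ninf => M.ninfSet

def RSel.holds {Q : Type} : RSel → Set Q → Set Q → Prop
  | .meet => fun S F => (S ∩ F).Nonempty
  | .sub => fun S F => S ⊆ F
  | .eq => fun S F => S = F

/-- The ω-language accepted by `M` under the condition `(c, r)`. -/
def OFA.Lang {A : Type} (M : OFA A) (c : CSel) (r : RSel) : Set (ℕ → A) :=
  {x | ∃ p, M.InitPath p x ∧ ∃ F ∈ M.Acc, RSel.holds r (M.csel c p) F}

/-- The ω-language accepted by `M` under the condition 𝔸 : some `F ∈ Acc` with `F ⊆ run p`. -/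
def OFA.LangA {A : Type} (M : OFA A) : Set (ℕ → A) :=
  {x | ∃ p, M.InitPath p x ∧ ∃ F ∈ M.Acc, F ⊆ M.runSet p}

/-- The ω-language accepted by `M` under the condition 𝔸' : some `F ∈ Acc` with `F ⊈ run p`. -/
def OFA.LangA' {A : Type} (M : OFA A) : Set (ℕ → A) :=
  {x | ∃ p, M.InitPath p x ∧ ∃ F ∈ M.Acc, ¬ F ⊆ M.runSet p}

/-- The ω-language accepted by `M` under the condition 𝕃 : some `F ∈ Acc` with `F ⊆ inf p`. -/
def OFA.LangL {A : Type} (M : OFA A) : Set (ℕ → A) :=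
  {x | ∃ p, M.InitPath p x ∧ ∃ F ∈ M.Acc, F ⊆ M.infSet p}

/-- The ω-language accepted by `M` under the condition 𝕃' : some `F ∈ Acc` with `F ⊈ inf p`. -/
def OFA.LangL' {A : Type} (M : OFA A) : Set (ℕ → A) :=
  {x | ∃ p, M.InitPath p x ∧ ∃ F ∈ M.Acc, ¬ F ⊆ M.infSet p}

/-- The class of ω-languages of the form `L M` for automata `M` satisfying `P`. -/
def AutClass (A : Type) (P : OFA A → Prop) (L : (M : OFA A) → Set (ℕ → A)) :
    Set (Set (ℕ → A)) :=
  {X | ∃ M : OFA A, P M ∧ L M = X}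

/-- The finite factor `x_i x_{i+1} … x_{j-1}` of the ω-word `x`. -/
def extract {A : Type} (x : ℕ → A) (i j : ℕ) : List A :=
  (List.range (j - i)).map fun k => x (i + k)

/-- The ω-language `V · U^ω`: ω-words of the form `u₀u₁u₂⋯` with `u₀ ∈ V`
and all `uᵢ` (i ≥ 1) nonempty words of `U`, described via cut points. -/
def omegaPiece {A : Type} (V U : Language A) : Set (ℕ → A) :=
  {x | ∃ c : ℕ → ℕ, (∀ i, c i < c (i + 1)) ∧
    extract x 0 (c 0) ∈ V ∧ ∀ i, extract x (c i) (c (i + 1)) ∈ U}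

/-- An ω-language is ω-rational if it is a finite union `⋃ᵢ Vᵢ · Uᵢ^ω`
with all `Vᵢ`, `Uᵢ` rational (regular) languages of finite words. -/
def IsOmegaRat {A : Type} (L : Set (ℕ → A)) : Prop :=
  ∃ (n : ℕ) (V U : Fin n → Language A),
    (∀ i, (V i).IsRegular) ∧ (∀ i, (U i).IsRegular) ∧
    L = ⋃ i, omegaPiece (V i) (U i)

/-- Countable union of closed sets. -/
def IsFsigmaSet {X : Type*} [TopologicalSpace X] (S : Set X) : Prop :=
  ∃ f : ℕ → Set X, (∀ n, IsClosed (f n)) ∧ S = ⋃ n, f n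

/-- Countable intersection of open sets. -/
def IsGdeltaSet {X : Type*} [TopologicalSpace X] (S : Set X) : Prop :=
  ∃ f : ℕ → Set X, (∀ n, IsOpen (f n)) ∧ S = ⋂ n, f n

def OFA.singAcc {A : Type} (M : OFA A) : OFA A :=
  { M with Acc := {S | ∃ q, (∃ F ∈ M.Acc, q ∈ F) ∧ S = {q}} }

lemma singAcc_lang {A : Type} (M : OFA A) :
    (M.singAcc).LangA = M.Lang CSel.run RSel.meet := by
  ext x
  constructor
  · rintro ⟨p, hp, F, ⟨q, ⟨G, hG, hqG⟩, rfl⟩, hsub⟩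
    exact ⟨p, hp, G, hG, q, hsub rfl, hqG⟩
  · rintro ⟨p, hp, F, hF, q, hq, hqF⟩
    exact ⟨p, hp, {q}, ⟨q, ⟨F, hF, hqF⟩, rfl⟩, Set.singleton_subset_iff.mpr hq⟩

theorem stmt_2 (A : Type) [Fintype A] :
    AutClass A (fun _ : OFA A => True) (fun M => M.Lang CSel.run RSel.meet) ⊆ AutClass A (fun _ : OFA A => True) OFA.LangA ∧
    AutClass A OFA.Deterministic (fun M => M.Lang CSel.run RSel.meet) ⊆ AutClass A OFA.Deterministic OFA.LangA ∧
    AutClass A OFA.Complete (fun M => M.Lang CSel.run RSel.meet) ⊆ AutClass A OFA.Complete OFA.LangA ∧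
    AutClass A (fun M : OFA A => M.Deterministic ∧ M.Complete) (fun M => M.Lang CSel.run RSel.meet) ⊆ AutClass A (fun M : OFA A => M.Deterministic ∧ M.Complete) OFA.LangA := by
  refine ⟨?_, ?_, ?_, ?_⟩ <;>
  · rintro X ⟨M, hM, rfl⟩
    exact ⟨M.singAcc, hM, singAcc_lang M⟩
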